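/- Let C : ℝ → Matrix (Fin 2) (Fin 2) ℝ be differentiable with C'(t) = C(t)² for all t. Then the functions x(t) = tr(C(t)) and y(t) = det(C(t)) satisfy x' = x² − 2y and y' = x·y. -/

import Mathlib

theorem stmt2 (C : ℝ → Matrix (Fin 2) (Fin 2) ℝ)
    (hC : ∀ t i j, HasDerivAt (fun s => C s i j) ((C t ^ 2) i j) t) (t : ℝ) :
    HasDerivAt (fun s => Matrix.trace (C s))
      ((Matrix.trace (C t)) ^ 2 - 2 * Matrix.det (C t)) t ∧
    HasDerivAt (fun s => Matrix.det (C s))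
      (Matrix.trace (C t) * Matrix.det (C t)) t := by
  have h00 := hC t 0 0
  have h01 := hC t 0 1
  have h10 := hC t 1 0
  have h11 := hC t 1 1
  constructor
  · have h := h00.add h11
    convert h using 1
    · rfl
    · rfl
    · funext s; simp [Matrix.trace_fin_two]
    · simp [pow_two, Matrix.mul_apply, Fin.sum_univ_two, Matrix.trace_fin_two,
        Matrix.det_fin_two]
      ring
  · have h := (h00.mul h11).sub (h01.mul h10)
    convert h using 1
    · rfl
    · rfl
    · funext s; simp [Matrix.det_fin_two]
    · simp [pow_two, Matrix.mul_apply, Fin.sum_univ_two, Matrix.trace_fin_two,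
        Matrix.det_fin_two]
      ring
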